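/- The multiplication map induces a well-defined ℂ-linear isomorphism H(Ω₊) ⊗_ℂ H(Ω₋) → H(Ω), [ω₊] ⊗ [ω₋] ↦ [ω₊ω₋], where H denotes the quotient of the kernel of d by its image on the respective subalgebra (Künneth formula for the D = 2 supersymmetry algebra cohomology differential). -/

import Mathlib

/-!
Künneth formula for the D = 2 supersymmetry algebra cohomology.
`Ω₊` is modelled by pairs `(a₀, a₁)` of polynomials in `ψ₁,…,ψ_{N₊}`
(representing `a₀ + c̃₁a₁`), `Ω₋` by pairs of polynomials in `χ₁,…,χ_{N₋}`
(representing `b₀ + c̃₂b₁`), and the multiplication map `Ω₊ × Ω₋ → Ω` is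
`(a₀ + c̃₁a₁)(b₀ + c̃₂b₁) = a₀b₀ + c̃₁a₁b₀ + c̃₂a₀b₁ + c̃₁c̃₂a₁b₁`.
-/

open MvPolynomial

noncomputable section

/-- `ℂ[ψ₁,…,ψ_{N₊}]`. -/
abbrev Rp (Np : ℕ) : Type := MvPolynomial (Fin Np) ℂ

/-- `ℂ[χ₁,…,χ_{N₋}]`. -/
abbrev Rm (Nm : ℕ) : Type := MvPolynomial (Fin Nm) ℂ

/-- `ℂ[ψ₁,…,ψ_{N₊}, χ₁,…,χ_{N₋}]`. -/
abbrev R2 (Np Nm : ℕ) : Type := MvPolynomial (Fin Np ⊕ Fin Nm) ℂ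

/-- `Ω₊`: free module with basis `{1, c̃₁}` over `ℂ[ψ₁,…,ψ_{N₊}]`. -/
abbrev Omp (Np : ℕ) : Type := Fin 2 → Rp Np

/-- `Ω₋`: free module with basis `{1, c̃₂}` over `ℂ[χ₁,…,χ_{N₋}]`. -/
abbrev Omm (Nm : ℕ) : Type := Fin 2 → Rm Nm

/-- `Ω`: free module with basis `{1, c̃₁, c̃₂, c̃₁c̃₂}` over `R2`. -/
abbrev Om2 (Np Nm : ℕ) : Type := Fin 4 → R2 Np Nm

/-- `P = Σ ψᵢ²` in `Ω₊`. -/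
def Ppl (Np : ℕ) : Rp Np := ∑ i, X i ^ 2

/-- `Q = Σ χᵢ²` in `Ω₋`. -/
def Qmi (Nm : ℕ) : Rm Nm := ∑ i, X i ^ 2

/-- `P = Σ ψᵢ²` in `Ω`. -/
def P2 (Np Nm : ℕ) : R2 Np Nm := ∑ i : Fin Np, X (Sum.inl i) ^ 2

/-- `Q = Σ χᵢ²` in `Ω`. -/
def Q2 (Np Nm : ℕ) : R2 Np Nm := ∑ i : Fin Nm, X (Sum.inr i) ^ 2

lemma renP (Np Nm : ℕ) :
    rename (Sum.inl : Fin Np → Fin Np ⊕ Fin Nm) (Ppl Np) = P2 Np Nm := by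
  simp [Ppl, P2]

lemma renQ (Np Nm : ℕ) :
    rename (Sum.inr : Fin Nm → Fin Np ⊕ Fin Nm) (Qmi Nm) = Q2 Np Nm := by
  simp [Qmi, Q2]

/-- The restriction of `d` to `Ω₊`: `d(a₀ + c̃₁a₁) = Pa₁`. -/
def dpL (Np : ℕ) : Omp Np →ₗ[ℂ] Omp Np where
  toFun ω := ![Ppl Np * ω 1, 0]
  map_add' a b := by
    funext k
    fin_cases k <;>
      simp [Matrix.cons_val_zero, Matrix.cons_val_one, Matrix.head_cons, mul_add]
  map_smul' c a := by
    funext k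
    fin_cases k <;>
      simp [Matrix.cons_val_zero, Matrix.cons_val_one, Matrix.head_cons, mul_smul_comm]

/-- The restriction of `d` to `Ω₋`: `d(b₀ + c̃₂b₁) = Qb₁`. -/
def dmL (Nm : ℕ) : Omm Nm →ₗ[ℂ] Omm Nm where
  toFun ω := ![Qmi Nm * ω 1, 0]
  map_add' a b := by
    funext k
    fin_cases k <;>
      simp [Matrix.cons_val_zero, Matrix.cons_val_one, Matrix.head_cons, mul_add]
  map_smul' c a := by
    funext k
    fin_cases k <;>
      simp [Matrix.cons_val_zero, Matrix.cons_val_one, Matrix.head_cons, mul_smul_comm]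

/-- The differential on `Ω`:
`d(ω₀ + c̃₁ω₁ + c̃₂ω₂ + c̃₁c̃₂ω₃) = Pω₁ + Qω₂ + (Pc̃₂ − Qc̃₁)ω₃`. -/
def d2L (Np Nm : ℕ) : Om2 Np Nm →ₗ[ℂ] Om2 Np Nm where
  toFun ω := ![P2 Np Nm * ω 1 + Q2 Np Nm * ω 2, -(Q2 Np Nm * ω 3), P2 Np Nm * ω 3, 0]
  map_add' a b := by
    funext k
    fin_cases k <;>
      simp [Matrix.cons_val_zero, Matrix.cons_val_one, Matrix.head_cons, mul_add] <;>
      ring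
  map_smul' c a := by
    funext k
    fin_cases k <;>
      simp [Matrix.cons_val_zero, Matrix.cons_val_one, Matrix.head_cons, mul_smul_comm,
        smul_add]

/-- The multiplication map `Ω₊ × Ω₋ → Ω`,
`(a₀ + c̃₁a₁)(b₀ + c̃₂b₁) = a₀b₀ + c̃₁a₁b₀ + c̃₂a₀b₁ + c̃₁c̃₂a₁b₁`. -/
def mul2 {Np Nm : ℕ} (a : Omp Np) (b : Omm Nm) : Om2 Np Nm :=
  ![rename Sum.inl (a 0) * rename Sum.inr (b 0),
    rename Sum.inl (a 1) * rename Sum.inr (b 0),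
    rename Sum.inl (a 0) * rename Sum.inr (b 1),
    rename Sum.inl (a 1) * rename Sum.inr (b 1)]

/-- The product of two cocycles is a cocycle. -/
lemma mul2_ker {Np Nm : ℕ} {a : Omp Np} {b : Omm Nm}
    (ha : dpL Np a = 0) (hb : dmL Nm b = 0) : d2L Np Nm (mul2 a b) = 0 := by
  have ha1 : Ppl Np * a 1 = 0 := by simpa [dpL] using congrFun ha 0
  have hb1 : Qmi Nm * b 1 = 0 := by simpa [dmL] using congrFun hb 0
  have e1 : ∀ y : Rm Nm,
      P2 Np Nm * (rename Sum.inl (a 1) * rename Sum.inr y) = 0 := by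
    intro y
    rw [← mul_assoc, ← renP Np Nm, ← map_mul, ha1, map_zero, zero_mul]
  have e2 : ∀ x : Rp Np,
      Q2 Np Nm * (rename Sum.inl x * rename Sum.inr (b 1)) = 0 := by
    intro x
    rw [mul_left_comm, ← renQ Np Nm, ← map_mul, hb1, map_zero, mul_zero]
  funext k
  fin_cases k <;>
    simp [d2L, mul2, Matrix.cons_val_zero, Matrix.cons_val_one, Matrix.head_cons, e1, e2]

/-- The image of `d` on `Ω₊`, as a submodule of the kernel. -/
def BsubP (Np : ℕ) : Submodule ℂ (LinearMap.ker (dpL Np)) :=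
  Submodule.comap (LinearMap.ker (dpL Np)).subtype (LinearMap.range (dpL Np))

/-- `H(Ω₊) = ker d / im d` on `Ω₊`. -/
def Hp (Np : ℕ) : Type := LinearMap.ker (dpL Np) ⧸ BsubP Np

noncomputable instance (Np : ℕ) : AddCommGroup (Hp Np) := Submodule.Quotient.addCommGroup _
instance (Np : ℕ) : Module ℂ (Hp Np) := Submodule.Quotient.module _

/-- The image of `d` on `Ω₋`, as a submodule of the kernel. -/
def BsubM (Nm : ℕ) : Submodule ℂ (LinearMap.ker (dmL Nm)) :=
  Submodule.comap (LinearMap.ker (dmL Nm)).subtype (LinearMap.range (dmL Nm))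

/-- `H(Ω₋) = ker d / im d` on `Ω₋`. -/
def Hm (Nm : ℕ) : Type := LinearMap.ker (dmL Nm) ⧸ BsubM Nm

noncomputable instance (Nm : ℕ) : AddCommGroup (Hm Nm) := Submodule.Quotient.addCommGroup _
instance (Nm : ℕ) : Module ℂ (Hm Nm) := Submodule.Quotient.module _

/-- The image of `d` on `Ω`, as a submodule of the kernel. -/
def Bsub2 (Np Nm : ℕ) : Submodule ℂ (LinearMap.ker (d2L Np Nm)) :=
  Submodule.comap (LinearMap.ker (d2L Np Nm)).subtype (LinearMap.range (d2L Np Nm))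

/-- `H(Ω) = ker d / im d`. -/
def H2 (Np Nm : ℕ) : Type := LinearMap.ker (d2L Np Nm) ⧸ Bsub2 Np Nm

noncomputable instance (Np Nm : ℕ) : AddCommGroup (H2 Np Nm) :=
  Submodule.Quotient.addCommGroup _
instance (Np Nm : ℕ) : Module ℂ (H2 Np Nm) := Submodule.Quotient.module _

/-- The cohomology class of a cocycle in `Ω₊`. -/
def clsp {Np : ℕ} (x : Omp Np) (hx : dpL Np x = 0) : Hp Np :=
  Submodule.Quotient.mk ⟨x, LinearMap.mem_ker.mpr hx⟩

/-- The cohomology class of a cocycle in `Ω₋`. -/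
def clsm {Nm : ℕ} (x : Omm Nm) (hx : dmL Nm x = 0) : Hm Nm :=
  Submodule.Quotient.mk ⟨x, LinearMap.mem_ker.mpr hx⟩

/-- The cohomology class of a cocycle in `Ω`. -/
def cls2 {Np Nm : ℕ} (x : Om2 Np Nm) (hx : d2L Np Nm x = 0) : H2 Np Nm :=
  Submodule.Quotient.mk ⟨x, LinearMap.mem_ker.mpr hx⟩

/-! ### Auxiliary development for the Künneth formula -/

open TensorProduct in
/-- Every linear endomorphism of a vector space has a generalized inverse. -/
lemma exists_gen_inv {K V : Type*} [Field K] [AddCommGroup V] [Module K V]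
    (f : V →ₗ[K] V) : ∃ g : V →ₗ[K] V, ∀ x, f (g (f x)) = f x := by
  obtain ⟨W, hW⟩ := Submodule.exists_isCompl (LinearMap.ker f)
  obtain ⟨U, hU⟩ := Submodule.exists_isCompl (LinearMap.range f)
  set F : W →ₗ[K] LinearMap.range f :=
    (f.comp W.subtype).codRestrict (LinearMap.range f)
      (fun w => LinearMap.mem_range_self _ _) with hF
  have hbij : Function.Bijective F := by
    constructor
    · intro a b hab
      have h1 : f (a : V) = f (b : V) := congrArg Subtype.val hab
      have : (a : V) - b ∈ LinearMap.ker f ⊓ W :=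
        ⟨by simp [LinearMap.mem_ker, map_sub, h1, sub_eq_zero],
          Submodule.sub_mem _ a.2 b.2⟩
      rw [hW.inf_eq_bot] at this
      exact Subtype.ext (by simpa [sub_eq_zero] using this)
    · rintro ⟨y, v, rfl⟩
      obtain ⟨k, w, hk, hw, hkw⟩ :=
        Submodule.codisjoint_iff_exists_add_eq.mp hW.codisjoint v
      refine ⟨⟨w, hw⟩, Subtype.ext ?_⟩
      have : f k = 0 := hk
      simp [F, ← hkw, this]
  set e := LinearEquiv.ofBijective F hbij
  refine ⟨W.subtype ∘ₗ (e.symm : LinearMap.range f →ₗ[K] W) ∘ₗ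
    ((LinearMap.range f).linearProjOfIsCompl U hU), fun x => ?_⟩
  have h1 : ((LinearMap.range f).linearProjOfIsCompl U hU) (f x)
      = ⟨f x, LinearMap.mem_range_self _ _⟩ :=
    Submodule.linearProjOfIsCompl_apply_left hU ⟨f x, LinearMap.mem_range_self _ _⟩
  simp only [LinearMap.comp_apply, h1]
  have h2 : F (e.symm ⟨f x, LinearMap.mem_range_self _ _⟩) = ⟨f x, _⟩ :=
    e.apply_symm_apply _
  have := congrArg Subtype.val h2
  simpa [F] using this

section KunnethAux

open TensorProduct

variable (Np Nm : ℕ)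

/-- The multiplication map `Rp ⊗ Rm → R2`. -/
def Efwd : Rp Np ⊗[ℂ] Rm Nm →ₐ[ℂ] R2 Np Nm :=
  Algebra.TensorProduct.productMap (rename Sum.inl) (rename Sum.inr)

/-- The inverse of `Efwd`. -/
def Ebwd : R2 Np Nm →ₐ[ℂ] Rp Np ⊗[ℂ] Rm Nm :=
  aeval (Sum.elim (fun i => X i ⊗ₜ[ℂ] 1) (fun j => (1 : Rp Np) ⊗ₜ[ℂ] X j))

lemma Efwd_tmul (x : Rp Np) (y : Rm Nm) :
    Efwd Np Nm (x ⊗ₜ[ℂ] y) = rename Sum.inl x * rename Sum.inr y := by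
  simp [Efwd]

lemma Efwd_Ebwd (z : R2 Np Nm) : Efwd Np Nm (Ebwd Np Nm z) = z := by
  have : (Efwd Np Nm).comp (Ebwd Np Nm) = AlgHom.id ℂ (R2 Np Nm) := by
    apply MvPolynomial.algHom_ext
    rintro (i | j) <;> simp [Efwd, Ebwd]
  exact congrArg (fun f => f z) (congrArg DFunLike.coe this)

lemma Ebwd_Efwd (t : Rp Np ⊗[ℂ] Rm Nm) : Ebwd Np Nm (Efwd Np Nm t) = t := by
  have : (Ebwd Np Nm).comp (Efwd Np Nm) = AlgHom.id ℂ _ := by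
    apply Algebra.TensorProduct.ext
    · apply MvPolynomial.algHom_ext; intro i
      simp [Efwd, Ebwd]
    · apply MvPolynomial.algHom_ext; intro j
      simp [Efwd, Ebwd]
  exact congrArg (fun f => f t) (congrArg DFunLike.coe this)

lemma Ebwd_prod (x : Rp Np) (y : Rm Nm) :
    Ebwd Np Nm (rename Sum.inl x * rename Sum.inr y) = x ⊗ₜ[ℂ] y := by
  rw [← Efwd_tmul, Ebwd_Efwd]

/-- Multiplication by `P` on `Rp`. -/
abbrev mulP : Rp Np →ₗ[ℂ] Rp Np := LinearMap.mulLeft ℂ (Ppl Np)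

/-- Multiplication by `Q` on `Rm`. -/
abbrev mulQ : Rm Nm →ₗ[ℂ] Rm Nm := LinearMap.mulLeft ℂ (Qmi Nm)

/-- The operator `f ⊗ g` on `R2`, transported through `Efwd`. -/
def Lop (f : Rp Np →ₗ[ℂ] Rp Np) (g : Rm Nm →ₗ[ℂ] Rm Nm) : R2 Np Nm →ₗ[ℂ] R2 Np Nm :=
  (Efwd Np Nm).toLinearMap ∘ₗ TensorProduct.map f g ∘ₗ (Ebwd Np Nm).toLinearMap

lemma Lop_prod (f : Rp Np →ₗ[ℂ] Rp Np) (g : Rm Nm →ₗ[ℂ] Rm Nm) (x : Rp Np) (y : Rm Nm) :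
    Lop Np Nm f g (rename Sum.inl x * rename Sum.inr y)
      = rename Sum.inl (f x) * rename Sum.inr (g y) := by
  simp [Lop, Ebwd_prod, Efwd_tmul]

lemma Lop_id (z : R2 Np Nm) : Lop Np Nm LinearMap.id LinearMap.id z = z := by
  simp [Lop, TensorProduct.map_id, Efwd_Ebwd]

lemma Lop_sub_left (f f' : Rp Np →ₗ[ℂ] Rp Np) (g : Rm Nm →ₗ[ℂ] Rm Nm) (z : R2 Np Nm) :
    Lop Np Nm (f - f') g z = Lop Np Nm f g z - Lop Np Nm f' g z := by
  have : TensorProduct.map (f - f') g = TensorProduct.map f g - TensorProduct.map f' g := by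
    apply TensorProduct.ext'
    intro x y
    simp [TensorProduct.sub_tmul]
  simp [Lop, this]

lemma Lop_sub_right (f : Rp Np →ₗ[ℂ] Rp Np) (g g' : Rm Nm →ₗ[ℂ] Rm Nm) (z : R2 Np Nm) :
    Lop Np Nm f (g - g') z = Lop Np Nm f g z - Lop Np Nm f g' z := by
  have : TensorProduct.map f (g - g') = TensorProduct.map f g - TensorProduct.map f g' := by
    apply TensorProduct.ext'
    intro x y
    simp [TensorProduct.tmul_sub]
  simp [Lop, this]

lemma Lop_zero_left (g : Rm Nm →ₗ[ℂ] Rm Nm) (z : R2 Np Nm) :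
    Lop Np Nm 0 g z = 0 := by
  have : TensorProduct.map (0 : Rp Np →ₗ[ℂ] Rp Np) g = 0 := by
    apply TensorProduct.ext'
    intro x y
    simp
  simp [Lop, this]

lemma Lop_zero_right (f : Rp Np →ₗ[ℂ] Rp Np) (z : R2 Np Nm) :
    Lop Np Nm f 0 z = 0 := by
  have : TensorProduct.map f (0 : Rm Nm →ₗ[ℂ] Rm Nm) = 0 := by
    apply TensorProduct.ext'
    intro x y
    simp
  simp [Lop, this]

lemma Efwd_mulP (t : Rp Np ⊗[ℂ] Rm Nm) :
    P2 Np Nm * Efwd Np Nm t = Efwd Np Nm (TensorProduct.map (mulP Np) LinearMap.id t) := by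
  induction t with
  | zero => simp
  | tmul x y =>
      simp only [TensorProduct.map_tmul, Efwd_tmul, LinearMap.mulLeft_apply, LinearMap.id_coe,
        id_eq, map_mul, ← renP Np Nm]
      ring
  | add t₁ t₂ h₁ h₂ => simp [mul_add, h₁, h₂]

lemma Efwd_mulQ (t : Rp Np ⊗[ℂ] Rm Nm) :
    Q2 Np Nm * Efwd Np Nm t = Efwd Np Nm (TensorProduct.map LinearMap.id (mulQ Nm) t) := by
  induction t with
  | zero => simp
  | tmul x y =>
      simp only [TensorProduct.map_tmul, Efwd_tmul, LinearMap.mulLeft_apply, LinearMap.id_coe,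
        id_eq, map_mul, ← renQ Np Nm]
      ring
  | add t₁ t₂ h₁ h₂ => simp [mul_add, h₁, h₂]

lemma map_map_left (f f' : Rp Np →ₗ[ℂ] Rp Np) (g : Rm Nm →ₗ[ℂ] Rm Nm)
    (t : Rp Np ⊗[ℂ] Rm Nm) :
    TensorProduct.map f LinearMap.id (TensorProduct.map f' g t)
      = TensorProduct.map (f ∘ₗ f') g t := by
  rw [← LinearMap.comp_apply, ← TensorProduct.map_comp]
  simp

lemma mulP2_Lop (f : Rp Np →ₗ[ℂ] Rp Np) (g : Rm Nm →ₗ[ℂ] Rm Nm) (z : R2 Np Nm) :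
    P2 Np Nm * Lop Np Nm f g z = Lop Np Nm (mulP Np ∘ₗ f) g z := by
  simp only [Lop, LinearMap.comp_apply, AlgHom.toLinearMap_apply, Efwd_mulP, map_map_left]

lemma map_map_right (f : Rp Np →ₗ[ℂ] Rp Np) (g g' : Rm Nm →ₗ[ℂ] Rm Nm)
    (t : Rp Np ⊗[ℂ] Rm Nm) :
    TensorProduct.map LinearMap.id g (TensorProduct.map f g' t)
      = TensorProduct.map f (g ∘ₗ g') t := by
  rw [← LinearMap.comp_apply, ← TensorProduct.map_comp]
  simp

lemma mulQ2_Lop (f : Rp Np →ₗ[ℂ] Rp Np) (g : Rm Nm →ₗ[ℂ] Rm Nm) (z : R2 Np Nm) :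
    Q2 Np Nm * Lop Np Nm f g z = Lop Np Nm f (mulQ Nm ∘ₗ g) z := by
  simp only [Lop, LinearMap.comp_apply, AlgHom.toLinearMap_apply, Efwd_mulQ, map_map_right]

lemma Lop_mulP2 (f : Rp Np →ₗ[ℂ] Rp Np) (g : Rm Nm →ₗ[ℂ] Rm Nm) (z : R2 Np Nm) :
    Lop Np Nm f g (P2 Np Nm * z) = Lop Np Nm (f ∘ₗ mulP Np) g z := by
  conv_lhs => rw [← Efwd_Ebwd Np Nm z, Efwd_mulP]
  simp only [Lop, LinearMap.comp_apply, AlgHom.toLinearMap_apply, Ebwd_Efwd,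
    map_map_left, map_map_right]
  rw [← LinearMap.comp_apply (TensorProduct.map f g), ← TensorProduct.map_comp]
  simp

lemma Lop_mulQ2 (f : Rp Np →ₗ[ℂ] Rp Np) (g : Rm Nm →ₗ[ℂ] Rm Nm) (z : R2 Np Nm) :
    Lop Np Nm f g (Q2 Np Nm * z) = Lop Np Nm f (g ∘ₗ mulQ Nm) z := by
  conv_lhs => rw [← Efwd_Ebwd Np Nm z, Efwd_mulQ]
  simp only [Lop, LinearMap.comp_apply, AlgHom.toLinearMap_apply, Ebwd_Efwd,
    map_map_left, map_map_right]
  rw [← LinearMap.comp_apply (TensorProduct.map f g), ← TensorProduct.map_comp]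
  simp

end KunnethAux

section KunnethAux2

open TensorProduct

variable (Np Nm : ℕ)

/-- `1 - Pσ` on `Rp`. -/
def pi0p (σp : Rp Np →ₗ[ℂ] Rp Np) : Rp Np →ₗ[ℂ] Rp Np := LinearMap.id - mulP Np ∘ₗ σp

/-- `1 - σP` on `Rp`. -/
def pi1p (σp : Rp Np →ₗ[ℂ] Rp Np) : Rp Np →ₗ[ℂ] Rp Np := LinearMap.id - σp ∘ₗ mulP Np

/-- `1 - Qσ'` on `Rm`. -/
def pi0m (σm : Rm Nm →ₗ[ℂ] Rm Nm) : Rm Nm →ₗ[ℂ] Rm Nm := LinearMap.id - mulQ Nm ∘ₗ σm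

/-- `1 - σ'Q` on `Rm`. -/
def pi1m (σm : Rm Nm →ₗ[ℂ] Rm Nm) : Rm Nm →ₗ[ℂ] Rm Nm := LinearMap.id - σm ∘ₗ mulQ Nm

variable {Np Nm}
variable {σp : Rp Np →ₗ[ℂ] Rp Np} {σm : Rm Nm →ₗ[ℂ] Rm Nm}

lemma mulP_pi1p (hσp : ∀ x, mulP Np (σp (mulP Np x)) = mulP Np x) :
    mulP Np ∘ₗ pi1p Np σp = 0 := by
  apply LinearMap.ext; intro x
  simpa [pi1p, sub_eq_zero, mul_sub] using (hσp x).symm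

lemma pi0p_mulP (hσp : ∀ x, mulP Np (σp (mulP Np x)) = mulP Np x) :
    pi0p Np σp ∘ₗ mulP Np = 0 := by
  apply LinearMap.ext; intro x
  simpa [pi0p, sub_eq_zero] using (hσp x).symm

lemma mulQ_pi1m (hσm : ∀ x, mulQ Nm (σm (mulQ Nm x)) = mulQ Nm x) :
    mulQ Nm ∘ₗ pi1m Nm σm = 0 := by
  apply LinearMap.ext; intro x
  simpa [pi1m, sub_eq_zero, mul_sub] using (hσm x).symm

lemma pi0m_mulQ (hσm : ∀ x, mulQ Nm (σm (mulQ Nm x)) = mulQ Nm x) :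
    pi0m Nm σm ∘ₗ mulQ Nm = 0 := by
  apply LinearMap.ext; intro x
  simpa [pi0m, sub_eq_zero] using (hσm x).symm

lemma mulP_comp_σ : mulP Np ∘ₗ σp = LinearMap.id - pi0p Np σp := by
  simp [pi0p]

lemma σ_comp_mulP : σp ∘ₗ mulP Np = LinearMap.id - pi1p Np σp := by
  simp [pi1p]

lemma mulQ_comp_σ : mulQ Nm ∘ₗ σm = LinearMap.id - pi0m Nm σm := by
  simp [pi0m]

lemma σ_comp_mulQ : σm ∘ₗ mulQ Nm = LinearMap.id - pi1m Nm σm := by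
  simp [pi1m]

variable (Np Nm)

/-- Componentwise projection operator on `Ω₊`. -/
def piOmp (σp : Rp Np →ₗ[ℂ] Rp Np) : Omp Np →ₗ[ℂ] Omp Np where
  toFun a := ![pi0p Np σp (a 0), pi1p Np σp (a 1)]
  map_add' a b := by
    funext k
    fin_cases k <;>
      simp [Matrix.cons_val_zero, Matrix.cons_val_one, Matrix.head_cons]
  map_smul' c a := by
    funext k
    fin_cases k <;>
      simp [Matrix.cons_val_zero, Matrix.cons_val_one, Matrix.head_cons]

/-- Componentwise projection operator on `Ω₋`. -/
def piOmm (σm : Rm Nm →ₗ[ℂ] Rm Nm) : Omm Nm →ₗ[ℂ] Omm Nm where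
  toFun b := ![pi0m Nm σm (b 0), pi1m Nm σm (b 1)]
  map_add' a b := by
    funext k
    fin_cases k <;>
      simp [Matrix.cons_val_zero, Matrix.cons_val_one, Matrix.head_cons]
  map_smul' c a := by
    funext k
    fin_cases k <;>
      simp [Matrix.cons_val_zero, Matrix.cons_val_one, Matrix.head_cons]

variable {Np Nm}

lemma dp_piOmp (hσp : ∀ x, mulP Np (σp (mulP Np x)) = mulP Np x) (a : Omp Np) :
    dpL Np (piOmp Np σp a) = 0 := by
  have h := congrFun (congrArg DFunLike.coe (mulP_pi1p hσp)) (a 1)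
  funext k
  fin_cases k <;>
    simp_all [dpL, piOmp, Matrix.cons_val_zero, Matrix.cons_val_one, Matrix.head_cons]

lemma dm_piOmm (hσm : ∀ x, mulQ Nm (σm (mulQ Nm x)) = mulQ Nm x) (b : Omm Nm) :
    dmL Nm (piOmm Nm σm b) = 0 := by
  have h := congrFun (congrArg DFunLike.coe (mulQ_pi1m hσm)) (b 1)
  funext k
  fin_cases k <;>
    simp_all [dmL, piOmm, Matrix.cons_val_zero, Matrix.cons_val_one, Matrix.head_cons]

/-- `Ω₊ → H(Ω₊)`, projecting onto a harmonic representative then taking the class. -/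
def cpr (hσp : ∀ x, mulP Np (σp (mulP Np x)) = mulP Np x) : Omp Np →ₗ[ℂ] Hp Np :=
  (BsubP Np).mkQ ∘ₗ (piOmp Np σp).codRestrict (LinearMap.ker (dpL Np))
    (fun a => LinearMap.mem_ker.mpr (dp_piOmp hσp a))

/-- `Ω₋ → H(Ω₋)`. -/
def cmr (hσm : ∀ x, mulQ Nm (σm (mulQ Nm x)) = mulQ Nm x) : Omm Nm →ₗ[ℂ] Hm Nm :=
  (BsubM Nm).mkQ ∘ₗ (piOmm Nm σm).codRestrict (LinearMap.ker (dmL Nm))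
    (fun b => LinearMap.mem_ker.mpr (dm_piOmm hσm b))

lemma cpr_cocycle (hσp : ∀ x, mulP Np (σp (mulP Np x)) = mulP Np x)
    (a : Omp Np) (ha : dpL Np a = 0) : cpr hσp a = clsp a ha := by
  have ha1 : Ppl Np * a 1 = 0 := by simpa [dpL] using congrFun ha 0
  rw [cpr, clsp]
  show Submodule.Quotient.mk (p := BsubP Np) ⟨piOmp Np σp a, _⟩ = Submodule.Quotient.mk _
  refine (Submodule.Quotient.eq _).mpr (Submodule.mem_comap.mpr ⟨![0, -(σp (a 0))], ?_⟩)
  show _ = piOmp Np σp a - a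
  funext k
  fin_cases k <;>
    simp [dpL, piOmp, pi0p, pi1p, Matrix.cons_val_zero, Matrix.cons_val_one,
      Matrix.head_cons, ha1, mul_comm]

lemma cmr_cocycle (hσm : ∀ x, mulQ Nm (σm (mulQ Nm x)) = mulQ Nm x)
    (b : Omm Nm) (hb : dmL Nm b = 0) : cmr hσm b = clsm b hb := by
  have hb1 : Qmi Nm * b 1 = 0 := by simpa [dmL] using congrFun hb 0
  rw [cmr, clsm]
  show Submodule.Quotient.mk (p := BsubM Nm) ⟨piOmm Nm σm b, _⟩ = Submodule.Quotient.mk _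
  refine (Submodule.Quotient.eq _).mpr (Submodule.mem_comap.mpr ⟨![0, -(σm (b 0))], ?_⟩)
  show _ = piOmm Nm σm b - b
  funext k
  fin_cases k <;>
    simp [dmL, piOmm, pi0m, pi1m, Matrix.cons_val_zero, Matrix.cons_val_one,
      Matrix.head_cons, hb1, mul_comm]

end KunnethAux2

section KunnethAux3

open TensorProduct

variable {Np Nm : ℕ} {σp : Rp Np →ₗ[ℂ] Rp Np} {σm : Rm Nm →ₗ[ℂ] Rm Nm}

/-- Slot inclusion `Rp → Ω₊`. -/
abbrev iP (i : Fin 2) : Rp Np →ₗ[ℂ] Omp Np := LinearMap.single ℂ (fun _ : Fin 2 => Rp Np) i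

/-- Slot inclusion `Rm → Ω₋`. -/
abbrev iM (j : Fin 2) : Rm Nm →ₗ[ℂ] Omm Nm := LinearMap.single ℂ (fun _ : Fin 2 => Rm Nm) j

/-- Slot inclusion `R2 → Ω`. -/
abbrev i4 (k : Fin 4) : R2 Np Nm →ₗ[ℂ] Om2 Np Nm :=
  LinearMap.single ℂ (fun _ : Fin 4 => R2 Np Nm) k

/-- The building blocks of the inverse map. -/
def Tk (hσp : ∀ x, mulP Np (σp (mulP Np x)) = mulP Np x)
    (hσm : ∀ x, mulQ Nm (σm (mulQ Nm x)) = mulQ Nm x) (i j : Fin 2) :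
    Rp Np ⊗[ℂ] Rm Nm →ₗ[ℂ] TensorProduct ℂ (Hp Np) (Hm Nm) :=
  TensorProduct.map (cpr hσp ∘ₗ iP i) (cmr hσm ∘ₗ iM j)

/-- The map `Ω → H(Ω₊) ⊗ H(Ω₋)` on the level of cochains. -/
def ghat (hσp : ∀ x, mulP Np (σp (mulP Np x)) = mulP Np x)
    (hσm : ∀ x, mulQ Nm (σm (mulQ Nm x)) = mulQ Nm x) :
    Om2 Np Nm →ₗ[ℂ] TensorProduct ℂ (Hp Np) (Hm Nm) :=
  Tk hσp hσm 0 0 ∘ₗ (Ebwd Np Nm).toLinearMap ∘ₗ LinearMap.proj 0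
  + Tk hσp hσm 1 0 ∘ₗ (Ebwd Np Nm).toLinearMap ∘ₗ LinearMap.proj 1
  + Tk hσp hσm 0 1 ∘ₗ (Ebwd Np Nm).toLinearMap ∘ₗ LinearMap.proj 2
  + Tk hσp hσm 1 1 ∘ₗ (Ebwd Np Nm).toLinearMap ∘ₗ LinearMap.proj 3

lemma ghat_apply (hσp : ∀ x, mulP Np (σp (mulP Np x)) = mulP Np x)
    (hσm : ∀ x, mulQ Nm (σm (mulQ Nm x)) = mulQ Nm x) (ω : Om2 Np Nm) :
    ghat hσp hσm ω
      = Tk hσp hσm 0 0 (Ebwd Np Nm (ω 0)) + Tk hσp hσm 1 0 (Ebwd Np Nm (ω 1))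
        + Tk hσp hσm 0 1 (Ebwd Np Nm (ω 2)) + Tk hσp hσm 1 1 (Ebwd Np Nm (ω 3)) := by
  rfl

/-- Splitting an element of `Ω₊` into its two slots. -/
lemma omp_split (a : Omp Np) : iP 0 (a 0) + iP 1 (a 1) = a := by
  funext k
  fin_cases k <;> simp [Pi.single_apply]

lemma omm_split (b : Omm Nm) : iM 0 (b 0) + iM 1 (b 1) = b := by
  funext k
  fin_cases k <;> simp [Pi.single_apply]

lemma ghat_mul2 (hσp : ∀ x, mulP Np (σp (mulP Np x)) = mulP Np x)
    (hσm : ∀ x, mulQ Nm (σm (mulQ Nm x)) = mulQ Nm x) (a : Omp Np) (b : Omm Nm) :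
    ghat hσp hσm (mul2 a b) = cpr hσp a ⊗ₜ[ℂ] cmr hσm b := by
  rw [ghat_apply]
  have h0 : (mul2 a b) 0 = rename Sum.inl (a 0) * rename Sum.inr (b 0) := rfl
  have h1 : (mul2 a b) 1 = rename Sum.inl (a 1) * rename Sum.inr (b 0) := rfl
  have h2 : (mul2 a b) 2 = rename Sum.inl (a 0) * rename Sum.inr (b 1) := rfl
  have h3 : (mul2 a b) 3 = rename Sum.inl (a 1) * rename Sum.inr (b 1) := rfl
  rw [h0, h1, h2, h3, Ebwd_prod, Ebwd_prod, Ebwd_prod, Ebwd_prod]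
  simp only [Tk, TensorProduct.map_tmul, LinearMap.comp_apply]
  conv_rhs => rw [← omp_split a, ← omm_split b]
  simp only [map_add, TensorProduct.add_tmul, TensorProduct.tmul_add]
  abel

lemma cpr_iP0_mulP (hσp : ∀ x, mulP Np (σp (mulP Np x)) = mulP Np x) :
    cpr hσp ∘ₗ iP 0 ∘ₗ mulP Np = 0 := by
  apply LinearMap.ext; intro x
  have h := congrFun (congrArg DFunLike.coe (pi0p_mulP hσp)) x
  simp only [LinearMap.comp_apply, LinearMap.zero_apply] at h ⊢
  rw [cpr]
  show (BsubP Np).mkQ ((piOmp Np σp).codRestrict (LinearMap.ker (dpL Np))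
    (fun a => LinearMap.mem_ker.mpr (dp_piOmp hσp a)) (iP 0 (mulP Np x))) = 0
  have : piOmp Np σp (iP 0 (mulP Np x)) = 0 := by
    funext k
    fin_cases k <;>
      simp_all [piOmp, LinearMap.single_apply, Pi.single_apply]
  have hz : (piOmp Np σp).codRestrict (LinearMap.ker (dpL Np))
      (fun a => LinearMap.mem_ker.mpr (dp_piOmp hσp a)) (iP 0 (mulP Np x)) = 0 :=
    Subtype.ext (by simpa using this)
  rw [hz, map_zero]

lemma cmr_iM0_mulQ (hσm : ∀ x, mulQ Nm (σm (mulQ Nm x)) = mulQ Nm x) :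
    cmr hσm ∘ₗ iM 0 ∘ₗ mulQ Nm = 0 := by
  apply LinearMap.ext; intro x
  have h := congrFun (congrArg DFunLike.coe (pi0m_mulQ hσm)) x
  simp only [LinearMap.comp_apply, LinearMap.zero_apply] at h ⊢
  rw [cmr]
  show (BsubM Nm).mkQ ((piOmm Nm σm).codRestrict (LinearMap.ker (dmL Nm))
    (fun a => LinearMap.mem_ker.mpr (dm_piOmm hσm a)) (iM 0 (mulQ Nm x))) = 0
  have : piOmm Nm σm (iM 0 (mulQ Nm x)) = 0 := by
    funext k
    fin_cases k <;>
      simp_all [piOmm, LinearMap.single_apply, Pi.single_apply]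
  have hz : (piOmm Nm σm).codRestrict (LinearMap.ker (dmL Nm))
      (fun b => LinearMap.mem_ker.mpr (dm_piOmm hσm b)) (iM 0 (mulQ Nm x)) = 0 :=
    Subtype.ext (by simpa using this)
  rw [hz, map_zero]

lemma Tk_i0_mulP2 (hσp : ∀ x, mulP Np (σp (mulP Np x)) = mulP Np x)
    (hσm : ∀ x, mulQ Nm (σm (mulQ Nm x)) = mulQ Nm x) (j : Fin 2) (z : R2 Np Nm) :
    Tk hσp hσm 0 j (Ebwd Np Nm (P2 Np Nm * z)) = 0 := by
  have : Ebwd Np Nm (P2 Np Nm * z)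
      = TensorProduct.map (mulP Np) LinearMap.id (Ebwd Np Nm z) := by
    conv_lhs => rw [← Efwd_Ebwd Np Nm z, Efwd_mulP, Ebwd_Efwd]
  rw [this, Tk, ← LinearMap.comp_apply, ← TensorProduct.map_comp]
  have h1 : (cpr hσp ∘ₗ iP 0) ∘ₗ mulP Np = 0 := by
    rw [LinearMap.comp_assoc]; exact cpr_iP0_mulP hσp
  rw [h1]
  have : TensorProduct.map (0 : Rp Np →ₗ[ℂ] Hp Np)
      ((cmr hσm ∘ₗ iM j) ∘ₗ LinearMap.id) = 0 := by
    apply TensorProduct.ext'; intro x y; simp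
  rw [this]
  simp

lemma Tk_j0_mulQ2 (hσp : ∀ x, mulP Np (σp (mulP Np x)) = mulP Np x)
    (hσm : ∀ x, mulQ Nm (σm (mulQ Nm x)) = mulQ Nm x) (i : Fin 2) (z : R2 Np Nm) :
    Tk hσp hσm i 0 (Ebwd Np Nm (Q2 Np Nm * z)) = 0 := by
  have : Ebwd Np Nm (Q2 Np Nm * z)
      = TensorProduct.map LinearMap.id (mulQ Nm) (Ebwd Np Nm z) := by
    conv_lhs => rw [← Efwd_Ebwd Np Nm z, Efwd_mulQ, Ebwd_Efwd]
  rw [this, Tk, ← LinearMap.comp_apply, ← TensorProduct.map_comp]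
  have h1 : (cmr hσm ∘ₗ iM 0) ∘ₗ mulQ Nm = 0 := by
    rw [LinearMap.comp_assoc]; exact cmr_iM0_mulQ hσm
  rw [h1]
  have : TensorProduct.map ((cpr hσp ∘ₗ iP i) ∘ₗ LinearMap.id)
      (0 : Rm Nm →ₗ[ℂ] Hm Nm) = 0 := by
    apply TensorProduct.ext'; intro x y; simp
  rw [this]
  simp

lemma ghat_d2 (hσp : ∀ x, mulP Np (σp (mulP Np x)) = mulP Np x)
    (hσm : ∀ x, mulQ Nm (σm (mulQ Nm x)) = mulQ Nm x) (ω : Om2 Np Nm) :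
    ghat hσp hσm (d2L Np Nm ω) = 0 := by
  rw [ghat_apply]
  have h0 : (d2L Np Nm ω) 0 = P2 Np Nm * ω 1 + Q2 Np Nm * ω 2 := rfl
  have h1 : (d2L Np Nm ω) 1 = -(Q2 Np Nm * ω 3) := rfl
  have h2 : (d2L Np Nm ω) 2 = P2 Np Nm * ω 3 := rfl
  have h3 : (d2L Np Nm ω) 3 = 0 := rfl
  rw [h0, h1, h2, h3]
  simp only [map_add, map_neg, map_zero]
  rw [Tk_i0_mulP2 hσp hσm, Tk_j0_mulQ2 hσp hσm, Tk_j0_mulQ2 hσp hσm, Tk_i0_mulP2 hσp hσm]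
  simp

end KunnethAux3

section KunnethAux4

open TensorProduct

variable {Np Nm : ℕ}

lemma mul2_add_left (a a' : Omp Np) (b : Omm Nm) :
    mul2 (a + a') b = mul2 a b + mul2 a' b := by
  funext k
  fin_cases k <;>
    simp [mul2, Matrix.cons_val_zero, Matrix.cons_val_one, Matrix.head_cons, add_mul]

lemma mul2_smul_left (c : ℂ) (a : Omp Np) (b : Omm Nm) :
    mul2 (c • a) b = c • mul2 a b := by
  funext k
  fin_cases k <;>
    simp [mul2, Matrix.cons_val_zero, Matrix.cons_val_one, Matrix.head_cons, smul_mul_assoc]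

lemma mul2_add_right (a : Omp Np) (b b' : Omm Nm) :
    mul2 a (b + b') = mul2 a b + mul2 a b' := by
  funext k
  fin_cases k <;>
    simp [mul2, Matrix.cons_val_zero, Matrix.cons_val_one, Matrix.head_cons, mul_add]

lemma mul2_smul_right (c : ℂ) (a : Omp Np) (b : Omm Nm) :
    mul2 a (c • b) = c • mul2 a b := by
  funext k
  fin_cases k <;>
    simp [mul2, Matrix.cons_val_zero, Matrix.cons_val_one, Matrix.head_cons, mul_smul_comm]

variable (Np Nm)

/-- The multiplication as a bilinear map on cocycles, valued in cocycles. -/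
def zmul : LinearMap.ker (dpL Np) →ₗ[ℂ] LinearMap.ker (dmL Nm) →ₗ[ℂ]
    LinearMap.ker (d2L Np Nm) :=
  LinearMap.mk₂ ℂ
    (fun a b => ⟨mul2 a.val b.val,
      LinearMap.mem_ker.mpr (mul2_ker (LinearMap.mem_ker.mp a.2) (LinearMap.mem_ker.mp b.2))⟩)
    (fun a a' b => Subtype.ext (by simp [mul2_add_left]))
    (fun c a b => Subtype.ext (by simp [mul2_smul_left]))
    (fun a b b' => Subtype.ext (by simp [mul2_add_right]))
    (fun c a b => Subtype.ext (by simp [mul2_smul_right]))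

/-- The multiplication valued in `H(Ω)`. -/
def zmulH : LinearMap.ker (dpL Np) →ₗ[ℂ] LinearMap.ker (dmL Nm) →ₗ[ℂ] H2 Np Nm :=
  (zmul Np Nm).compr₂ (Bsub2 Np Nm).mkQ

variable {Np Nm}

lemma zmulH_apply (a : LinearMap.ker (dpL Np)) (b : LinearMap.ker (dmL Nm)) :
    zmulH Np Nm a b = cls2 (mul2 a.val b.val)
      (mul2_ker (LinearMap.mem_ker.mp a.2) (LinearMap.mem_ker.mp b.2)) := by
  rfl

lemma zmulH_right_coboundary (a : LinearMap.ker (dpL Np)) (b : LinearMap.ker (dmL Nm))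
    (hb : b ∈ BsubM Nm) : zmulH Np Nm a b = 0 := by
  obtain ⟨c, hc⟩ := Submodule.mem_comap.mp hb
  have ha1 : Ppl Np * a.val 1 = 0 := by
    have h := congrFun (LinearMap.mem_ker.mp a.2) 0
    simpa only [dpL, LinearMap.coe_mk, AddHom.coe_mk, Matrix.cons_val_zero,
      Pi.zero_apply] using h
  rw [zmulH_apply, cls2]
  refine (Submodule.Quotient.mk_eq_zero _).mpr ?_
  refine Submodule.mem_comap.mpr ⟨![0, 0, rename Sum.inl (a.val 0) * rename Sum.inr (c 1),
    -(rename Sum.inl (a.val 1) * rename Sum.inr (c 1))], ?_⟩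
  have hbv : b.val = dmL Nm c := hc.symm
  have hb0 : b.val 0 = Qmi Nm * c 1 := by rw [hbv]; rfl
  have hb1 : b.val 1 = 0 := by rw [hbv]; rfl
  have hren : rename (Sum.inr : Fin Nm → Fin Np ⊕ Fin Nm) (Qmi Nm * c 1)
      = Q2 Np Nm * rename Sum.inr (c 1) := by
    rw [map_mul, renQ]
  have hren2 : rename (Sum.inl : Fin Np → Fin Np ⊕ Fin Nm) (Ppl Np * a.val 1)
      = P2 Np Nm * rename Sum.inl (a.val 1) := by
    rw [map_mul, renP]
  have hP : P2 Np Nm * rename Sum.inl (a.val 1) = 0 := by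
    rw [← hren2, ha1, map_zero]
  show _ = mul2 a.val b.val
  funext k
  fin_cases k <;>
    simp [Submodule.subtype_apply, d2L, mul2, hb0, hb1, hren, -mul_eq_zero] <;>
    first
      | ring1
      | linear_combination (rename (Sum.inr : Fin Nm → Fin Np ⊕ Fin Nm) (c 1)) * hP
      | linear_combination (-(rename (Sum.inr : Fin Nm → Fin Np ⊕ Fin Nm) (c 1))) * hP
      | linear_combination ((2:ℂ) • rename (Sum.inr : Fin Nm → Fin Np ⊕ Fin Nm) (c 1)) * hP
      | linear_combination (2 * rename (Sum.inr : Fin Nm → Fin Np ⊕ Fin Nm) (c 1)) * hP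
      | linear_combination (-(2 * rename (Sum.inr : Fin Nm → Fin Np ⊕ Fin Nm) (c 1))) * hP

lemma zmulH_left_coboundary (a : LinearMap.ker (dpL Np)) (ha : a ∈ BsubP Np)
    (b : LinearMap.ker (dmL Nm)) : zmulH Np Nm a b = 0 := by
  obtain ⟨c, hc⟩ := Submodule.mem_comap.mp ha
  have hb1 : Qmi Nm * b.val 1 = 0 := by
    have h := congrFun (LinearMap.mem_ker.mp b.2) 0
    simpa only [dmL, LinearMap.coe_mk, AddHom.coe_mk, Matrix.cons_val_zero,
      Pi.zero_apply] using h
  rw [zmulH_apply, cls2]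
  refine (Submodule.Quotient.mk_eq_zero _).mpr ?_
  refine Submodule.mem_comap.mpr ⟨![0, rename Sum.inl (c 1) * rename Sum.inr (b.val 0), 0,
    rename Sum.inl (c 1) * rename Sum.inr (b.val 1)], ?_⟩
  have hav : a.val = dpL Np c := hc.symm
  have ha0 : a.val 0 = Ppl Np * c 1 := by rw [hav]; rfl
  have ha1 : a.val 1 = 0 := by rw [hav]; rfl
  have hren : rename (Sum.inl : Fin Np → Fin Np ⊕ Fin Nm) (Ppl Np * c 1)
      = P2 Np Nm * rename Sum.inl (c 1) := by
    rw [map_mul, renP]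
  have hren2 : rename (Sum.inr : Fin Nm → Fin Np ⊕ Fin Nm) (Qmi Nm * b.val 1)
      = Q2 Np Nm * rename Sum.inr (b.val 1) := by
    rw [map_mul, renQ]
  have hQ : Q2 Np Nm * rename Sum.inr (b.val 1) = 0 := by
    rw [← hren2, hb1, map_zero]
  show _ = mul2 a.val b.val
  funext k
  fin_cases k <;>
    simp [Submodule.subtype_apply, d2L, mul2, ha0, ha1, hren, -mul_eq_zero] <;>
    first
      | ring1
      | linear_combination (rename (Sum.inl : Fin Np → Fin Np ⊕ Fin Nm) (c 1)) * hQ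
      | linear_combination (-(rename (Sum.inl : Fin Np → Fin Np ⊕ Fin Nm) (c 1))) * hQ
      | linear_combination (2 * rename (Sum.inl : Fin Np → Fin Np ⊕ Fin Nm) (c 1)) * hQ
      | linear_combination (-(2 * rename (Sum.inl : Fin Np → Fin Np ⊕ Fin Nm) (c 1))) * hQ

variable (Np Nm)

/-- Descend `zmulH` in the second argument. -/
def FHm : LinearMap.ker (dpL Np) →ₗ[ℂ] Hm Nm →ₗ[ℂ] H2 Np Nm where
  toFun a := Submodule.liftQ (BsubM Nm) (zmulH Np Nm a)
    (fun b hb => LinearMap.mem_ker.mpr (zmulH_right_coboundary a b hb))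
  map_add' a a' := by
    refine Submodule.linearMap_qext _ ?_
    apply LinearMap.ext; intro b
    simp
    rfl
  map_smul' c a := by
    refine Submodule.linearMap_qext _ ?_
    apply LinearMap.ext; intro b
    simp
    rfl

/-- The induced map `H(Ω₊) → Hom(H(Ω₋), H(Ω))`. -/
def FH : Hp Np →ₗ[ℂ] Hm Nm →ₗ[ℂ] H2 Np Nm :=
  Submodule.liftQ (BsubP Np) (FHm Np Nm)
    (fun a ha => by
      refine LinearMap.mem_ker.mpr ?_
      refine Submodule.linearMap_qext _ ?_
      apply LinearMap.ext; intro b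
      exact zmulH_left_coboundary a ha b)

/-- The forward map `H(Ω₊) ⊗ H(Ω₋) → H(Ω)`. -/
def fmap : TensorProduct ℂ (Hp Np) (Hm Nm) →ₗ[ℂ] H2 Np Nm :=
  TensorProduct.lift (FH Np Nm)

variable {Np Nm}

lemma fmap_tmul (a : Omp Np) (b : Omm Nm) (ha : dpL Np a = 0) (hb : dmL Nm b = 0) :
    fmap Np Nm (clsp a ha ⊗ₜ[ℂ] clsm b hb) = cls2 (mul2 a b) (mul2_ker ha hb) := by
  rfl

end KunnethAux4

section KunnethAux5

open TensorProduct

variable {Np Nm : ℕ} {σp : Rp Np →ₗ[ℂ] Rp Np} {σm : Rm Nm →ₗ[ℂ] Rm Nm}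

lemma d2_i4_0 (w : R2 Np Nm) : d2L Np Nm (i4 0 w) = 0 := by
  funext k
  fin_cases k <;> simp [d2L, Pi.single_apply]

lemma d2_i4_1 (w : R2 Np Nm) : d2L Np Nm (i4 1 w) = i4 0 (P2 Np Nm * w) := by
  funext k
  fin_cases k <;> simp [d2L, Pi.single_apply]

lemma d2_i4_2 (w : R2 Np Nm) : d2L Np Nm (i4 2 w) = i4 0 (Q2 Np Nm * w) := by
  funext k
  fin_cases k <;> simp [d2L, Pi.single_apply]

lemma d2_i4_3 (w : R2 Np Nm) :
    d2L Np Nm (i4 3 w) = ![0, -(Q2 Np Nm * w), P2 Np Nm * w, 0] := by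
  funext k
  fin_cases k <;> simp [d2L, Pi.single_apply]

section Wmaps

lemma dW0 (z : R2 Np Nm) : d2L Np Nm (i4 0 (Lop Np Nm (pi0p Np σp) (pi0m Nm σm) z)) = 0 :=
  d2_i4_0 _

lemma dW1 (hσp : ∀ x, mulP Np (σp (mulP Np x)) = mulP Np x) (z : R2 Np Nm) : d2L Np Nm (i4 1 (Lop Np Nm (pi1p Np σp) (pi0m Nm σm) z)) = 0 := by
  rw [d2_i4_1, mulP2_Lop, mulP_pi1p hσp, Lop_zero_left, map_zero]

lemma dW2 (hσm : ∀ x, mulQ Nm (σm (mulQ Nm x)) = mulQ Nm x) (z : R2 Np Nm) : d2L Np Nm (i4 2 (Lop Np Nm (pi0p Np σp) (pi1m Nm σm) z)) = 0 := by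
  rw [d2_i4_2, mulQ2_Lop, mulQ_pi1m hσm, Lop_zero_right, map_zero]

lemma dW3 (hσp : ∀ x, mulP Np (σp (mulP Np x)) = mulP Np x) (hσm : ∀ x, mulQ Nm (σm (mulQ Nm x)) = mulQ Nm x) (z : R2 Np Nm) : d2L Np Nm (i4 3 (Lop Np Nm (pi1p Np σp) (pi1m Nm σm) z)) = 0 := by
  rw [d2_i4_3, mulP2_Lop, mulQ2_Lop, mulP_pi1p hσp, mulQ_pi1m hσm, Lop_zero_left,
    Lop_zero_right]
  funext k
  fin_cases k <;> simp

/-- The harmonic projection placed in slot `k`, corestricted to cocycles. -/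
def W0r (hσp : ∀ x, mulP Np (σp (mulP Np x)) = mulP Np x) (hσm : ∀ x, mulQ Nm (σm (mulQ Nm x)) = mulQ Nm x) : R2 Np Nm →ₗ[ℂ] LinearMap.ker (d2L Np Nm) :=
  (i4 0 ∘ₗ Lop Np Nm (pi0p Np σp) (pi0m Nm σm)).codRestrict _
    (fun z => LinearMap.mem_ker.mpr (dW0 z))

def W1r (hσp : ∀ x, mulP Np (σp (mulP Np x)) = mulP Np x) (hσm : ∀ x, mulQ Nm (σm (mulQ Nm x)) = mulQ Nm x) : R2 Np Nm →ₗ[ℂ] LinearMap.ker (d2L Np Nm) :=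
  (i4 1 ∘ₗ Lop Np Nm (pi1p Np σp) (pi0m Nm σm)).codRestrict _
    (fun z => LinearMap.mem_ker.mpr (dW1 hσp z))

def W2r (hσp : ∀ x, mulP Np (σp (mulP Np x)) = mulP Np x) (hσm : ∀ x, mulQ Nm (σm (mulQ Nm x)) = mulQ Nm x) : R2 Np Nm →ₗ[ℂ] LinearMap.ker (d2L Np Nm) :=
  (i4 2 ∘ₗ Lop Np Nm (pi0p Np σp) (pi1m Nm σm)).codRestrict _
    (fun z => LinearMap.mem_ker.mpr (dW2 hσm z))

def W3r (hσp : ∀ x, mulP Np (σp (mulP Np x)) = mulP Np x) (hσm : ∀ x, mulQ Nm (σm (mulQ Nm x)) = mulQ Nm x) : R2 Np Nm →ₗ[ℂ] LinearMap.ker (d2L Np Nm) :=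
  (i4 3 ∘ₗ Lop Np Nm (pi1p Np σp) (pi1m Nm σm)).codRestrict _
    (fun z => LinearMap.mem_ker.mpr (dW3 hσp hσm z))

lemma cpr_eq_clsp (hσp : ∀ x, mulP Np (σp (mulP Np x)) = mulP Np x) (v : Omp Np) :
    cpr hσp v = clsp (piOmp Np σp v) (dp_piOmp hσp v) := rfl

lemma cmr_eq_clsm (hσm : ∀ x, mulQ Nm (σm (mulQ Nm x)) = mulQ Nm x) (v : Omm Nm) :
    cmr hσm v = clsm (piOmm Nm σm v) (dm_piOmm hσm v) := rfl

lemma Lop_Efwd (f : Rp Np →ₗ[ℂ] Rp Np) (g : Rm Nm →ₗ[ℂ] Rm Nm) (t : Rp Np ⊗[ℂ] Rm Nm) :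
    Lop Np Nm f g (Efwd Np Nm t) = Efwd Np Nm (TensorProduct.map f g t) := by
  simp [Lop, Ebwd_Efwd]

/-- `mul2` of slot inclusions is a slot inclusion. -/
lemma mul2_piOmp_iP (i j : Fin 2) (k : Fin 4)
    (hk : (k : ℕ) = 2 * (j : ℕ) + (i : ℕ)) (x : Rp Np) (y : Rm Nm) :
    mul2 (piOmp Np σp (iP i x)) (piOmm Nm σm (iM j y))
      = i4 k (rename Sum.inl
          ((if i = 0 then pi0p Np σp else pi1p Np σp) x)
        * rename Sum.inr ((if j = 0 then pi0m Nm σm else pi1m Nm σm) y)) := by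
  fin_cases i <;> fin_cases j <;> fin_cases k <;> simp_all <;>
    · funext l
      fin_cases l <;>
        simp [mul2, piOmp, piOmm, Pi.single_apply, map_zero]

end Wmaps

section FG

lemma cls2_eq_mkQ (x : Om2 Np Nm) (hx : d2L Np Nm x = 0) (w : LinearMap.ker (d2L Np Nm))
    (hw : (w : Om2 Np Nm) = x) : cls2 x hx = (Bsub2 Np Nm).mkQ w := by
  cases w with
  | mk v hv => cases hw; rfl

lemma clsp_eq_mk (a : Omp Np) (ha : dpL Np a = 0) (w : LinearMap.ker (dpL Np))
    (hw : (w : Omp Np) = a) : clsp a ha = Submodule.Quotient.mk w := by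
  cases w with
  | mk v hv => cases hw; rfl

lemma clsm_eq_mk (b : Omm Nm) (hb : dmL Nm b = 0) (w : LinearMap.ker (dmL Nm))
    (hw : (w : Omm Nm) = b) : clsm b hb = Submodule.Quotient.mk w := by
  cases w with
  | mk v hv => cases hw; rfl

lemma fmap_Tk00 (hσp : ∀ x, mulP Np (σp (mulP Np x)) = mulP Np x)
    (hσm : ∀ x, mulQ Nm (σm (mulQ Nm x)) = mulQ Nm x) (z : R2 Np Nm) :
    fmap Np Nm (Tk hσp hσm 0 0 (Ebwd Np Nm z)) = (Bsub2 Np Nm).mkQ (W0r hσp hσm z) := by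
  have key : fmap Np Nm ∘ₗ Tk hσp hσm 0 0
      = ((Bsub2 Np Nm).mkQ ∘ₗ W0r hσp hσm) ∘ₗ (Efwd Np Nm).toLinearMap := by
    apply TensorProduct.ext'
    intro x y
    simp only [LinearMap.comp_apply, AlgHom.toLinearMap_apply, Tk, TensorProduct.map_tmul]
    rw [cpr_eq_clsp hσp, cmr_eq_clsm hσm, fmap_tmul]
    refine cls2_eq_mkQ _ _ _ ?_
    show i4 0 (Lop Np Nm (pi0p Np σp) (pi0m Nm σm) (Efwd Np Nm (x ⊗ₜ[ℂ] y))) = _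
    rw [Lop_Efwd, TensorProduct.map_tmul, Efwd_tmul]
    exact (mul2_piOmp_iP (σp := σp) (σm := σm) 0 0 0 rfl x y).symm
  exact (LinearMap.congr_fun key (Ebwd Np Nm z)).trans
    (congrArg (fun t => (Bsub2 Np Nm).mkQ (W0r hσp hσm t)) (Efwd_Ebwd Np Nm z))

lemma fmap_Tk10 (hσp : ∀ x, mulP Np (σp (mulP Np x)) = mulP Np x)
    (hσm : ∀ x, mulQ Nm (σm (mulQ Nm x)) = mulQ Nm x) (z : R2 Np Nm) :
    fmap Np Nm (Tk hσp hσm 1 0 (Ebwd Np Nm z)) = (Bsub2 Np Nm).mkQ (W1r hσp hσm z) := by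
  have key : fmap Np Nm ∘ₗ Tk hσp hσm 1 0
      = ((Bsub2 Np Nm).mkQ ∘ₗ W1r hσp hσm) ∘ₗ (Efwd Np Nm).toLinearMap := by
    apply TensorProduct.ext'
    intro x y
    simp only [LinearMap.comp_apply, AlgHom.toLinearMap_apply, Tk, TensorProduct.map_tmul]
    rw [cpr_eq_clsp hσp, cmr_eq_clsm hσm, fmap_tmul]
    refine cls2_eq_mkQ _ _ _ ?_
    show i4 1 (Lop Np Nm (pi1p Np σp) (pi0m Nm σm) (Efwd Np Nm (x ⊗ₜ[ℂ] y))) = _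
    rw [Lop_Efwd, TensorProduct.map_tmul, Efwd_tmul]
    exact (mul2_piOmp_iP (σp := σp) (σm := σm) 1 0 1 rfl x y).symm
  exact (LinearMap.congr_fun key (Ebwd Np Nm z)).trans
    (congrArg (fun t => (Bsub2 Np Nm).mkQ (W1r hσp hσm t)) (Efwd_Ebwd Np Nm z))

lemma fmap_Tk01 (hσp : ∀ x, mulP Np (σp (mulP Np x)) = mulP Np x)
    (hσm : ∀ x, mulQ Nm (σm (mulQ Nm x)) = mulQ Nm x) (z : R2 Np Nm) :
    fmap Np Nm (Tk hσp hσm 0 1 (Ebwd Np Nm z)) = (Bsub2 Np Nm).mkQ (W2r hσp hσm z) := by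
  have key : fmap Np Nm ∘ₗ Tk hσp hσm 0 1
      = ((Bsub2 Np Nm).mkQ ∘ₗ W2r hσp hσm) ∘ₗ (Efwd Np Nm).toLinearMap := by
    apply TensorProduct.ext'
    intro x y
    simp only [LinearMap.comp_apply, AlgHom.toLinearMap_apply, Tk, TensorProduct.map_tmul]
    rw [cpr_eq_clsp hσp, cmr_eq_clsm hσm, fmap_tmul]
    refine cls2_eq_mkQ _ _ _ ?_
    show i4 2 (Lop Np Nm (pi0p Np σp) (pi1m Nm σm) (Efwd Np Nm (x ⊗ₜ[ℂ] y))) = _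
    rw [Lop_Efwd, TensorProduct.map_tmul, Efwd_tmul]
    exact (mul2_piOmp_iP (σp := σp) (σm := σm) 0 1 2 rfl x y).symm
  exact (LinearMap.congr_fun key (Ebwd Np Nm z)).trans
    (congrArg (fun t => (Bsub2 Np Nm).mkQ (W2r hσp hσm t)) (Efwd_Ebwd Np Nm z))

lemma fmap_Tk11 (hσp : ∀ x, mulP Np (σp (mulP Np x)) = mulP Np x)
    (hσm : ∀ x, mulQ Nm (σm (mulQ Nm x)) = mulQ Nm x) (z : R2 Np Nm) :
    fmap Np Nm (Tk hσp hσm 1 1 (Ebwd Np Nm z)) = (Bsub2 Np Nm).mkQ (W3r hσp hσm z) := by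
  have key : fmap Np Nm ∘ₗ Tk hσp hσm 1 1
      = ((Bsub2 Np Nm).mkQ ∘ₗ W3r hσp hσm) ∘ₗ (Efwd Np Nm).toLinearMap := by
    apply TensorProduct.ext'
    intro x y
    simp only [LinearMap.comp_apply, AlgHom.toLinearMap_apply, Tk, TensorProduct.map_tmul]
    rw [cpr_eq_clsp hσp, cmr_eq_clsm hσm, fmap_tmul]
    refine cls2_eq_mkQ _ _ _ ?_
    show i4 3 (Lop Np Nm (pi1p Np σp) (pi1m Nm σm) (Efwd Np Nm (x ⊗ₜ[ℂ] y))) = _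
    rw [Lop_Efwd, TensorProduct.map_tmul, Efwd_tmul]
    exact (mul2_piOmp_iP (σp := σp) (σm := σm) 1 1 3 rfl x y).symm
  exact (LinearMap.congr_fun key (Ebwd Np Nm z)).trans
    (congrArg (fun t => (Bsub2 Np Nm).mkQ (W3r hσp hσm t)) (Efwd_Ebwd Np Nm z))

end FG

end KunnethAux5

section KunnethFinal

open TensorProduct

variable {Np Nm : ℕ} {σp : Rp Np →ₗ[ℂ] Rp Np} {σm : Rm Nm →ₗ[ℂ] Rm Nm}

/-- The inverse map on cohomology. -/
def gmap (hσp : ∀ x, mulP Np (σp (mulP Np x)) = mulP Np x)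
    (hσm : ∀ x, mulQ Nm (σm (mulQ Nm x)) = mulQ Nm x) :
    H2 Np Nm →ₗ[ℂ] TensorProduct ℂ (Hp Np) (Hm Nm) :=
  Submodule.liftQ (Bsub2 Np Nm)
    (ghat hσp hσm ∘ₗ (LinearMap.ker (d2L Np Nm)).subtype)
    (by
      intro w hw
      obtain ⟨v, hv⟩ := Submodule.mem_comap.mp hw
      refine LinearMap.mem_ker.mpr ?_
      simp only [LinearMap.comp_apply, Submodule.subtype_apply]
      rw [show ((w : Om2 Np Nm)) = d2L Np Nm v from hv.symm]
      exact ghat_d2 hσp hσm v)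

lemma gmap_mk (hσp : ∀ x, mulP Np (σp (mulP Np x)) = mulP Np x)
    (hσm : ∀ x, mulQ Nm (σm (mulQ Nm x)) = mulQ Nm x) (w : LinearMap.ker (d2L Np Nm)) :
    gmap hσp hσm ((Bsub2 Np Nm).mkQ w) = ghat hσp hσm (w : Om2 Np Nm) := rfl

lemma fg (hσp : ∀ x, mulP Np (σp (mulP Np x)) = mulP Np x)
    (hσm : ∀ x, mulQ Nm (σm (mulQ Nm x)) = mulQ Nm x) (z : Om2 Np Nm)
    (hz : d2L Np Nm z = 0) :
    fmap Np Nm (ghat hσp hσm z) = cls2 z hz := by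
  have c0 : P2 Np Nm * z 1 + Q2 Np Nm * z 2 = 0 := by
    have h := congrFun hz 0
    simpa only [d2L, LinearMap.coe_mk, AddHom.coe_mk, Matrix.cons_val_zero,
      Pi.zero_apply] using h
  have c1 : Q2 Np Nm * z 3 = 0 := by
    have h := congrFun hz 1
    simp only [d2L, LinearMap.coe_mk, AddHom.coe_mk, Matrix.cons_val_one, Matrix.head_cons,
      Pi.zero_apply] at h
    exact neg_eq_zero.mp h
  have c2 : P2 Np Nm * z 3 = 0 := by
    have h := congrFun hz 2
    simpa only [d2L, LinearMap.coe_mk, AddHom.coe_mk, Matrix.cons_val_two, Matrix.tail_cons,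
      Matrix.head_cons, Pi.zero_apply] using h
  have e2 : Q2 Np Nm * z 2 = -(P2 Np Nm * z 1) := by linear_combination c0
  -- slot identities
  have s0 : P2 Np Nm * Lop Np Nm σp LinearMap.id (z 0)
        + Q2 Np Nm * Lop Np Nm (pi0p Np σp) σm (z 0)
      = z 0 - Lop Np Nm (pi0p Np σp) (pi0m Nm σm) (z 0) := by
    rw [mulP2_Lop, mulQ2_Lop, mulP_comp_σ, mulQ_comp_σ, Lop_sub_left, Lop_sub_right, Lop_id]
    ring
  have e1 : Q2 Np Nm * Lop Np Nm σp LinearMap.id (z 2)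
      = Lop Np Nm σp LinearMap.id (Q2 Np Nm * z 2) := by
    rw [mulQ2_Lop, Lop_mulQ2]
    simp [LinearMap.comp_id, LinearMap.id_comp]
  have s1 : -(Q2 Np Nm * (Lop Np Nm σp LinearMap.id (z 2)
        - Lop Np Nm (pi1p Np σp) σm (z 1)))
      = z 1 - Lop Np Nm (pi1p Np σp) (pi0m Nm σm) (z 1) := by
    rw [mul_sub, e1, e2, map_neg, Lop_mulP2, σ_comp_mulP, mulQ2_Lop, mulQ_comp_σ,
      Lop_sub_left, Lop_sub_right, Lop_id]
    ring
  have e3 : Lop Np Nm (pi0p Np σp) σm (Q2 Np Nm * z 2) = 0 := by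
    rw [e2, map_neg, Lop_mulP2, pi0p_mulP hσp, Lop_zero_left, neg_zero]
  have s2 : P2 Np Nm * (Lop Np Nm σp LinearMap.id (z 2)
        - Lop Np Nm (pi1p Np σp) σm (z 1))
      = z 2 - Lop Np Nm (pi0p Np σp) (pi1m Nm σm) (z 2) := by
    rw [mul_sub, mulP2_Lop, mulP2_Lop, mulP_comp_σ, mulP_pi1p hσp, Lop_zero_left,
      Lop_sub_left, Lop_id, sub_zero]
    have e4 : Lop Np Nm (pi0p Np σp) (pi1m Nm σm) (z 2)
        = Lop Np Nm (pi0p Np σp) LinearMap.id (z 2)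
          - Lop Np Nm (pi0p Np σp) (σm ∘ₗ mulQ Nm) (z 2) := by
      rw [show pi1m Nm σm = LinearMap.id - σm ∘ₗ mulQ Nm from rfl, Lop_sub_right]
    have e5 : Lop Np Nm (pi0p Np σp) (σm ∘ₗ mulQ Nm) (z 2) = 0 := by
      rw [← Lop_mulQ2]
      exact e3
    rw [e4, e5]
    ring
  have s3 : (0 : R2 Np Nm) = z 3 - Lop Np Nm (pi1p Np σp) (pi1m Nm σm) (z 3) := by
    have e6 : Lop Np Nm (σp ∘ₗ mulP Np) (pi1m Nm σm) (z 3) = 0 := by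
      rw [← Lop_mulP2, c2, map_zero]
    have e7 : Lop Np Nm LinearMap.id (σm ∘ₗ mulQ Nm) (z 3) = 0 := by
      rw [← Lop_mulQ2, c1, map_zero]
    have e8 : Lop Np Nm (pi1p Np σp) (pi1m Nm σm) (z 3) = z 3 := by
      rw [show pi1p Np σp = LinearMap.id - σp ∘ₗ mulP Np from rfl, Lop_sub_left, e6,
        show pi1m Nm σm = LinearMap.id - σm ∘ₗ mulQ Nm from rfl, Lop_sub_right, e7, Lop_id]
      ring
    rw [e8]
    ring
  -- assemble
  rw [ghat_apply, map_add, map_add, map_add, fmap_Tk00 hσp hσm, fmap_Tk10 hσp hσm,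
    fmap_Tk01 hσp hσm, fmap_Tk11 hσp hσm]
  show (Bsub2 Np Nm).mkQ (W0r hσp hσm (z 0)) + (Bsub2 Np Nm).mkQ (W1r hσp hσm (z 1))
    + (Bsub2 Np Nm).mkQ (W2r hσp hσm (z 2)) + (Bsub2 Np Nm).mkQ (W3r hσp hσm (z 3)) = cls2 z hz
  rw [← map_add ((Bsub2 Np Nm).mkQ) (W0r hσp hσm (z 0)) (W1r hσp hσm (z 1)),
    ← map_add ((Bsub2 Np Nm).mkQ) _ (W2r hσp hσm (z 2)),
    ← map_add ((Bsub2 Np Nm).mkQ) _ (W3r hσp hσm (z 3))]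
  set η : Om2 Np Nm := ![0, Lop Np Nm σp LinearMap.id (z 0),
    Lop Np Nm (pi0p Np σp) σm (z 0),
    Lop Np Nm σp LinearMap.id (z 2) - Lop Np Nm (pi1p Np σp) σm (z 1)] with hη
  have hS : ((W0r hσp hσm (z 0) + W1r hσp hσm (z 1) + W2r hσp hσm (z 2)
        + W3r hσp hσm (z 3) : LinearMap.ker (d2L Np Nm)) : Om2 Np Nm)
      = ![Lop Np Nm (pi0p Np σp) (pi0m Nm σm) (z 0),
          Lop Np Nm (pi1p Np σp) (pi0m Nm σm) (z 1),
          Lop Np Nm (pi0p Np σp) (pi1m Nm σm) (z 2),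
          Lop Np Nm (pi1p Np σp) (pi1m Nm σm) (z 3)] := by
    funext k
    fin_cases k <;>
      simp [W0r, W1r, W2r, W3r, Pi.single_apply]
  have hd2η : d2L Np Nm η
      = z - ![Lop Np Nm (pi0p Np σp) (pi0m Nm σm) (z 0),
          Lop Np Nm (pi1p Np σp) (pi0m Nm σm) (z 1),
          Lop Np Nm (pi0p Np σp) (pi1m Nm σm) (z 2),
          Lop Np Nm (pi1p Np σp) (pi1m Nm σm) (z 3)] := by
    funext k
    fin_cases k
    · exact s0
    · exact s1
    · exact s2
    · exact s3
  rw [show cls2 z hz = (Bsub2 Np Nm).mkQ ⟨z, LinearMap.mem_ker.mpr hz⟩ from rfl]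
  refine (Submodule.Quotient.eq _).mpr (Submodule.mem_comap.mpr ⟨-η, ?_⟩)
  rw [map_neg, hd2η]
  show _ = ((W0r hσp hσm (z 0) + W1r hσp hσm (z 1) + W2r hσp hσm (z 2)
      + W3r hσp hσm (z 3) : LinearMap.ker (d2L Np Nm)) : Om2 Np Nm) - z
  rw [hS, neg_sub]

theorem kunneth_aux (Np Nm : ℕ) (σp : Rp Np →ₗ[ℂ] Rp Np) (σm : Rm Nm →ₗ[ℂ] Rm Nm)
    (hσp : ∀ x, mulP Np (σp (mulP Np x)) = mulP Np x)
    (hσm : ∀ x, mulQ Nm (σm (mulQ Nm x)) = mulQ Nm x) :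
    ∃ f : (TensorProduct ℂ (Hp Np) (Hm Nm)) ≃ₗ[ℂ] H2 Np Nm,
      ∀ (a : Omp Np) (b : Omm Nm) (ha : dpL Np a = 0) (hb : dmL Nm b = 0),
        f (clsp a ha ⊗ₜ[ℂ] clsm b hb) = cls2 (mul2 a b) (mul2_ker ha hb) := by
  have hfg : fmap Np Nm ∘ₗ gmap hσp hσm = LinearMap.id := by
    refine Submodule.linearMap_qext _ ?_
    apply LinearMap.ext; intro w
    show fmap Np Nm (ghat hσp hσm (w : Om2 Np Nm)) = Submodule.Quotient.mk w
    rw [fg hσp hσm (w : Om2 Np Nm) (LinearMap.mem_ker.mp w.2)]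
    exact cls2_eq_mkQ _ _ w rfl
  have hgf : gmap hσp hσm ∘ₗ fmap Np Nm = LinearMap.id := by
    apply TensorProduct.ext'
    intro u v
    obtain ⟨a', rfl⟩ := Submodule.Quotient.mk_surjective (BsubP Np) u
    obtain ⟨b', rfl⟩ := Submodule.Quotient.mk_surjective (BsubM Nm) v
    obtain ⟨a, ha⟩ := a'
    obtain ⟨b, hb⟩ := b'
    have hu : Submodule.Quotient.mk (p := BsubP Np) ⟨a, ha⟩
        = clsp a (LinearMap.mem_ker.mp ha) := (clsp_eq_mk _ _ _ rfl).symm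
    have hv : Submodule.Quotient.mk (p := BsubM Nm) ⟨b, hb⟩
        = clsm b (LinearMap.mem_ker.mp hb) := (clsm_eq_mk _ _ _ rfl).symm
    rw [LinearMap.comp_apply, LinearMap.id_apply, hu, hv, fmap_tmul]
    show ghat hσp hσm (mul2 a b) = _
    rw [ghat_mul2 hσp hσm, cpr_cocycle hσp a (LinearMap.mem_ker.mp ha),
      cmr_cocycle hσm b (LinearMap.mem_ker.mp hb)]
  refine ⟨LinearEquiv.ofLinear (fmap Np Nm) (gmap hσp hσm) hfg hgf, ?_⟩
  intro a b ha hb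
  rw [LinearEquiv.ofLinear_apply, fmap_tmul]

end KunnethFinal

/-- Künneth formula: the multiplication map induces a well-defined
`ℂ`-linear isomorphism `H(Ω₊) ⊗ H(Ω₋) ≃ H(Ω)`, `[ω₊] ⊗ [ω₋] ↦ [ω₊ω₋]`. -/
theorem stmt18 (Np Nm : ℕ) :
    ∃ f : (TensorProduct ℂ (Hp Np) (Hm Nm)) ≃ₗ[ℂ] H2 Np Nm,
      ∀ (a : Omp Np) (b : Omm Nm) (ha : dpL Np a = 0) (hb : dmL Nm b = 0),
        f (clsp a ha ⊗ₜ[ℂ] clsm b hb) = cls2 (mul2 a b) (mul2_ker ha hb) := by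
  obtain ⟨σp, hσp⟩ := exists_gen_inv (mulP Np)
  obtain ⟨σm, hσm⟩ := exists_gen_inv (mulQ Nm)
  exact kunneth_aux Np Nm σp σm hσp hσm
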